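/- Let R be an integral domain, N a natural number, and ξ ∈ R a primitive N-th root of unity. Let X and Y be N-complexes of R-modules and define (X ⊗_ξ Y)^n = ⊕_{i+j=n} X^i ⊗ Y^j with differential acting on the summand X^i ⊗ Y^j by d(x ⊗ y) = d_X(x) ⊗ y + ξ^i · x ⊗ d_Y(y). Then d^N = 0 on X ⊗_ξ Y, i.e. X ⊗_ξ Y is again an N-complex. -/

import Mathlib

open scoped TensorProduct DirectSum

universe u v

variable {R : Type u} [CommRing R]

def lcast {M : ℤ → Type v} [∀ i, AddCommGroup (M i)] [∀ i, Module R (M i)]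
    {a b : ℤ} (h : a = b) : M a →ₗ[R] M b := by subst h; exact LinearMap.id

def dIter (M : ℤ → Type v) [∀ i, AddCommGroup (M i)] [∀ i, Module R (M i)]
    (d : ∀ i : ℤ, M i →ₗ[R] M (i + 1)) : ∀ (k : ℕ) (i : ℤ), M i →ₗ[R] M (i + k)
  | 0, i => lcast (by simp)
  | k + 1, i =>
    (lcast (show i + 1 + (k : ℕ) = i + ((k : ℕ) + 1 : ℕ) by push_cast; ring)).comp
      ((dIter M d k (i + 1)).comp (d i))

structure NCx (R : Type u) [CommRing R] (N : ℕ) where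
  M : ℤ → Type v
  [acg : ∀ i, AddCommGroup (M i)]
  [mod : ∀ i, Module R (M i)]
  d : ∀ i : ℤ, M i →ₗ[R] M (i + 1)
  dN : ∀ i : ℤ, dIter M d N i = 0

attribute [instance] NCx.acg NCx.mod

/-- The index set `{(i,j) : i + j = n}` of the degree-`n` part of a tensor product of
graded modules. -/
def TIdx (n : ℤ) : Type := {p : ℤ × ℤ // p.1 + p.2 = n}

instance (n : ℤ) : DecidableEq (TIdx n) := by unfold TIdx; infer_instance

/-- The degree-`n` part `⊕_{i+j=n} X^i ⊗ Y^j` of the tensor product of two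
graded modules. -/
def TObj {N : ℕ} (X Y : NCx.{u, v} R N) (n : ℤ) : Type v :=
  ⨁ p : TIdx n, (X.M p.1.1 ⊗[R] Y.M p.1.2)

noncomputable instance {N : ℕ} (X Y : NCx.{u, v} R N) (n : ℤ) :
    AddCommGroup (TObj X Y n) := by unfold TObj; infer_instance

noncomputable instance {N : ℕ} (X Y : NCx.{u, v} R N) (n : ℤ) :
    Module R (TObj X Y n) := by unfold TObj; infer_instance

/-- The twisted differential of the tensor product of two `N`-complexes: on the
summand `X^i ⊗ Y^j` it is `d(x ⊗ y) = d_X x ⊗ y + ξ^i • (x ⊗ d_Y y)`. -/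
noncomputable def TD {N : ℕ} (ξ : Rˣ) (X Y : NCx.{u, v} R N) (n : ℤ) :
    TObj X Y n →ₗ[R] TObj X Y (n + 1) :=
  DirectSum.toModule R (TIdx n) (TObj X Y (n + 1)) fun p =>
    ((DirectSum.lof R (TIdx (n + 1)) (fun q => X.M q.1.1 ⊗[R] Y.M q.1.2)
        ⟨(p.1.1 + 1, p.1.2), by obtain ⟨⟨i, j⟩, hp⟩ := p; dsimp at hp ⊢; omega⟩).comp
      (TensorProduct.map (X.d p.1.1) LinearMap.id))
    + (((ξ ^ p.1.1 : Rˣ) : R) •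
      ((DirectSum.lof R (TIdx (n + 1)) (fun q => X.M q.1.1 ⊗[R] Y.M q.1.2)
        ⟨(p.1.1, p.1.2 + 1), by obtain ⟨⟨i, j⟩, hp⟩ := p; dsimp at hp ⊢; omega⟩).comp
      (TensorProduct.map LinearMap.id (Y.d p.1.2))))

/-! ### Gaussian binomial machinery -/

def qint (ξ : R) (t : ℕ) : R := ∑ s ∈ Finset.range t, ξ ^ s

def qfac (ξ : R) : ℕ → R
  | 0 => 1
  | k + 1 => qfac ξ k * qint ξ (k + 1)

def gb (ξ : R) : ℕ → ℕ → R
  | 0, 0 => 1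
  | 0, _ + 1 => 0
  | k + 1, 0 => gb ξ k 0
  | k + 1, m + 1 => ξ ^ (m + 1) * gb ξ k (m + 1) + gb ξ k m

def gbp (ξ : R) (k : ℕ) : ℕ → R
  | 0 => 0
  | m + 1 => gb ξ k m

lemma qint_succ (ξ : R) (t : ℕ) : qint ξ (t + 1) = qint ξ t + ξ ^ t :=
  Finset.sum_range_succ _ _

lemma qfac_succ (ξ : R) (k : ℕ) : qfac ξ (k + 1) = qfac ξ k * qint ξ (k + 1) := rfl

lemma gb_succ (ξ : R) (k m : ℕ) :
    gb ξ (k + 1) m = ξ ^ m * gb ξ k m + gbp ξ k m := by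
  cases m <;> simp [gb, gbp]

lemma gb_zero_right (ξ : R) (k : ℕ) : gb ξ k 0 = 1 := by
  induction k with
  | zero => rfl
  | succ k ih => simpa [gb] using ih

lemma gb_of_lt (ξ : R) : ∀ k m : ℕ, k < m → gb ξ k m = 0 := by
  intro k
  induction k with
  | zero => intro m hm; match m, hm with | m + 1, _ => rfl
  | succ k ih =>
    intro m hm
    match m, hm with
    | m + 1, hm =>
      have h1 : k < m + 1 := by omega
      have h2 : k < m := by omega
      simp [gb, ih _ h1, ih _ h2]

lemma qint_add (ξ : R) (a b : ℕ) : qint ξ (a + b) = qint ξ a + ξ ^ a * qint ξ b := by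
  induction b with
  | zero => simp [qint]
  | succ b ih =>
    have h : a + (b + 1) = (a + b) + 1 := by omega
    rw [h, qint_succ, ih, qint_succ]
    ring

lemma gb_mul_qfac (ξ : R) : ∀ k m : ℕ, m ≤ k →
    gb ξ k m * (qfac ξ m * qfac ξ (k - m)) = qfac ξ k := by
  intro k
  induction k with
  | zero => intro m hm; interval_cases m; simp [gb, qfac]
  | succ k ih =>
    intro m hm
    match m with
    | 0 => simp [gb_zero_right, qfac]
    | m + 1 =>
      rcases Nat.lt_or_ge m k with hmk | hmk
      · have h1 : m + 1 ≤ k := hmk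
        have e1 : k + 1 - (m + 1) = (k - (m + 1)) + 1 := by omega
        have e2 : k - m = (k - (m + 1)) + 1 := by omega
        show gb ξ (k + 1) (m + 1) * _ = _
        rw [e1]
        have hgb : gb ξ (k + 1) (m + 1) = ξ ^ (m + 1) * gb ξ k (m + 1) + gb ξ k m := rfl
        have ih1 := ih (m + 1) h1
        have ih2 := ih m (by omega)
        rw [e2] at ih2
        have key : qint ξ (k + 1) = qint ξ (m + 1) + ξ ^ (m + 1) * qint ξ (k - m) := by
          have h : k + 1 = (m + 1) + (k - m) := by omega
          rw [h, qint_add]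
        calc gb ξ (k + 1) (m + 1) * (qfac ξ (m + 1) * qfac ξ (k - (m + 1) + 1))
            = ξ ^ (m + 1) * qint ξ (k - (m + 1) + 1) *
                (gb ξ k (m + 1) * (qfac ξ (m + 1) * qfac ξ (k - (m + 1)))) +
              qint ξ (m + 1) *
                (gb ξ k m * (qfac ξ m * qfac ξ (k - (m + 1) + 1))) := by
              rw [hgb, qfac_succ ξ (k - (m + 1)), qfac_succ ξ m]; ring
          _ = ξ ^ (m + 1) * qint ξ (k - (m + 1) + 1) * qfac ξ k
              + qint ξ (m + 1) * qfac ξ k := by rw [ih1, ih2]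
          _ = qfac ξ (k + 1) := by
              rw [qfac_succ, key]
              have h : k - (m + 1) + 1 = k - m := by omega
              rw [h]; ring
      · have hmk' : m = k := by omega
        subst hmk'
        have h0 : gb ξ (m + 1) (m + 1) = gb ξ m m := by
          simp [gb, gb_of_lt ξ m (m + 1) (by omega)]
        have ihm := ih m le_rfl
        simp only [Nat.sub_self, qfac] at ihm ⊢
        rw [h0]
        calc gb ξ m m * (qfac ξ m * qint ξ (m + 1) * 1)
            = gb ξ m m * (qfac ξ m * 1) * qint ξ (m + 1) := by ring
          _ = qfac ξ m * qint ξ (m + 1) := by rw [ihm]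

section Domain
variable [IsDomain R]

omit [IsDomain R] in
lemma qint_ne_zero' : True := trivial

lemma qint_ne_zero {N : ℕ} {ξ : Rˣ} (hξ : IsPrimitiveRoot ξ N) {t : ℕ}
    (h1 : 0 < t) (h2 : t < N) : qint (ξ : R) t ≠ 0 := by
  intro h
  have hne : (ξ : R) ^ t - 1 ≠ 0 := by
    intro hc
    apply hξ.pow_ne_one_of_pos_of_lt h1.ne' h2
    ext
    rw [Units.val_pow_eq_pow_val]
    simpa using sub_eq_zero.mp hc
  have hgeo := geom_sum_mul (ξ : R) t
  rw [← qint, h, zero_mul] at hgeo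
  exact hne hgeo.symm

lemma qfac_ne_zero {N : ℕ} {ξ : Rˣ} (hξ : IsPrimitiveRoot ξ N) :
    ∀ t : ℕ, t < N → qfac (ξ : R) t ≠ 0 := by
  intro t
  induction t with
  | zero => intro _; simp [qfac]
  | succ t ih =>
    intro ht
    rw [qfac_succ]
    exact mul_ne_zero (ih (by omega)) (qint_ne_zero hξ (by omega) ht)

lemma qint_N_eq_zero {N : ℕ} {ξ : Rˣ} (hξ : IsPrimitiveRoot ξ N) (hN : 2 ≤ N) :
    qint (ξ : R) N = 0 := by
  have hξ1 : (ξ : R) - 1 ≠ 0 := by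
    intro hc
    have h1 : ξ = 1 := by ext; simpa using sub_eq_zero.mp hc
    subst h1
    have hd := hξ.dvd_of_pow_eq_one 1 (one_pow 1)
    have := Nat.le_of_dvd one_pos hd
    omega
  have h := geom_sum_mul (ξ : R) N
  rw [← qint] at h
  have hN0 : (ξ : R) ^ N - 1 = 0 := by
    rw [sub_eq_zero, ← Units.val_pow_eq_pow_val, hξ.pow_eq_one, Units.val_one]
  rw [hN0] at h
  rcases mul_eq_zero.mp h with h' | h'
  · exact h'
  · exact absurd h' hξ1

lemma gb_eq_zero {N : ℕ} {ξ : Rˣ} (hξ : IsPrimitiveRoot ξ N) {m : ℕ}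
    (h1 : 0 < m) (h2 : m < N) : gb (ξ : R) N m = 0 := by
  have hN : 2 ≤ N := by omega
  have key := gb_mul_qfac (ξ : R) N m (by omega)
  have hfN : qfac (ξ : R) N = 0 := by
    have h : N = (N - 1) + 1 := by omega
    rw [h, qfac_succ, ← h, qint_N_eq_zero hξ hN, mul_zero]
  rw [hfN] at key
  rcases mul_eq_zero.mp key with h | h
  · exact h
  · rcases mul_eq_zero.mp h with h' | h'
    · exact absurd h' (qfac_ne_zero hξ m h2)
    · exact absurd h' (qfac_ne_zero hξ (N - m) (by omega))

end Domain

/-! ### Linear algebra machinery -/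

noncomputable abbrev Lof {N : ℕ} (X Y : NCx.{u, v} R N) (n i j : ℤ) (h : i + j = n) :
    (X.M i ⊗[R] Y.M j) →ₗ[R] TObj X Y n :=
  DirectSum.lof R (TIdx n) (fun q => X.M q.1.1 ⊗[R] Y.M q.1.2) ⟨(i, j), h⟩


lemma dIter_succ_apply (M : ℤ → Type v) [∀ i, AddCommGroup (M i)] [∀ i, Module R (M i)]
    (d : ∀ i : ℤ, M i →ₗ[R] M (i + 1)) (k : ℕ) (i : ℤ)
    (h : i + 1 + (k : ℕ) = i + ((k : ℕ) + 1 : ℕ)) (x : M i) :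
    dIter M d (k + 1) i x = lcast (R := R) (M := M) h (dIter M d k (i + 1) (d i x)) := rfl

lemma dIter_congr (M : ℤ → Type v) [∀ i, AddCommGroup (M i)] [∀ i, Module R (M i)]
    (d : ∀ i : ℤ, M i →ₗ[R] M (i + 1)) (s t : ℕ) (hst : s = t) (i : ℤ)
    (h : i + (t : ℕ) = i + (s : ℕ)) (x : M i) :
    dIter M d s i x = lcast (R := R) (M := M) h (dIter M d t i x) := by
  subst hst; rfl

lemma lcast_lcast {M : ℤ → Type v} [∀ i, AddCommGroup (M i)] [∀ i, Module R (M i)]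
    {a b c : ℤ} (h1 : a = b) (h2 : b = c) (x : M a) :
    lcast (R := R) (M := M) h2 (lcast (R := R) (M := M) h1 x)
      = lcast (R := R) (M := M) (h1.trans h2) x := by
  subst h1; subst h2; rfl

lemma TD_lof {N : ℕ} (ξ : Rˣ) (X Y : NCx.{u, v} R N) (n i j : ℤ) (hij : i + j = n)
    (z : X.M i ⊗[R] Y.M j) :
    TD ξ X Y n (Lof X Y n i j hij z) =
      Lof X Y (n + 1) (i + 1) j (by omega)
        (TensorProduct.map (X.d i) LinearMap.id z)
      + ((ξ ^ i : Rˣ) : R) •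
        Lof X Y (n + 1) i (j + 1) (by omega)
          (TensorProduct.map LinearMap.id (Y.d j) z) := by
  unfold TD Lof
  erw [DirectSum.toModule_lof]
  rfl

lemma lcast_lof {N : ℕ} (X Y : NCx.{u, v} R N) {a b : ℤ} (hab : a = b)
    (i j : ℤ) (hij : i + j = a) (z : X.M i ⊗[R] Y.M j) :
    lcast (R := R) (M := TObj X Y) hab (Lof X Y a i j hij z)
      = Lof X Y b i j (hab ▸ hij) z := by
  subst hab; rfl

lemma lof_lcast_left {N : ℕ} (X Y : NCx.{u, v} R N) {a b : ℤ} {hab : a = b}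
    {j n : ℤ} {h : b + j = n} {x : X.M a} {y : Y.M j} :
    Lof X Y n b j h ((lcast (R := R) (M := X.M) hab x) ⊗ₜ y) =
      Lof X Y n a j (by omega) (x ⊗ₜ y) := by
  cases hab; rfl

lemma lof_lcast_right {N : ℕ} (X Y : NCx.{u, v} R N) {a b : ℤ} {hab : a = b}
    {i n : ℤ} {h : i + b = n} {x : X.M i} {y : Y.M a} :
    Lof X Y n i b h (x ⊗ₜ (lcast (R := R) (M := Y.M) hab y)) =
      Lof X Y n i a (by omega) (x ⊗ₜ y) := by
  cases hab; rfl

lemma zero_case_helper {N : ℕ} (X Y : NCx.{u, v} R N) (n i j a b nn : ℤ)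
    (hij : i + j = n) (hia : i = a) (hjb : j = b) (hnn : n = nn) (hab : a + b = nn)
    (x : X.M i) (y : Y.M j) (c : R) (hc : c = 1) :
    lcast (R := R) (M := TObj X Y) hnn (Lof X Y n i j hij (x ⊗ₜ y)) =
      c • Lof X Y nn a b hab
        ((lcast (R := R) (M := X.M) hia x) ⊗ₜ (lcast (R := R) (M := Y.M) hjb y)) := by
  subst hia; subst hjb; subst hnn; subst hc
  rw [one_smul]
  rfl

lemma dIter_TD_lof {N : ℕ} (ξ : Rˣ) (X Y : NCx.{u, v} R N) (k : ℕ) :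
    ∀ (n i j : ℤ) (hij : i + j = n) (x : X.M i) (y : Y.M j),
    dIter (TObj X Y) (TD ξ X Y) k n (Lof X Y n i j hij (x ⊗ₜ y)) =
    ∑ m : Fin (k + 1),
      (((ξ ^ (i * ((m : ℕ) : ℤ)) : Rˣ) : R) * gb (ξ : R) k (m : ℕ)) •
        Lof X Y (n + (k : ℕ)) (i + ((k - (m : ℕ) : ℕ) : ℤ)) (j + ((m : ℕ) : ℤ))
          (by have := m.isLt; omega)
          ((dIter X.M X.d (k - (m : ℕ)) i x) ⊗ₜ (dIter Y.M Y.d (m : ℕ) j y)) := by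
  induction k with
  | zero =>
    intro n i j hij x y
    rw [Fin.sum_univ_one]
    exact zero_case_helper X Y n i j _ _ _ hij (by simp) (by simp) (by simp) (by omega)
      x y _ (by norm_num [gb_zero_right])
  | succ k ih =>
    intro n i j hij x y
    rw [dIter_succ_apply (TObj X Y) (TD ξ X Y) k n (by push_cast; ring) _]
    rw [TD_lof]
    rw [map_add, map_smul]
    rw [TensorProduct.map_tmul, TensorProduct.map_tmul]
    simp only [LinearMap.id_coe, id_eq]
    rw [ih (n + 1) (i + 1) j (by omega) (X.d i x) y,
        ih (n + 1) i (j + 1) (by omega) x (Y.d j y)]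
    simp only [map_add, map_sum, map_smul, lcast_lof]
    rw [Finset.smul_sum]
    simp only [smul_smul]
    symm
    simp only [gb_succ, mul_add, add_smul]
    rw [Finset.sum_add_distrib]
    congr 1
    · -- X side
      rw [Fin.sum_univ_castSucc]
      rw [show gb (ξ : R) k ((Fin.last (k + 1) : Fin (k + 2)) : ℕ) = 0 from
        gb_of_lt _ _ _ (by simp)]
      simp only [mul_zero, zero_smul, add_zero]
      apply Finset.sum_congr rfl
      intro m _
      have hlt := m.isLt
      have e0 : ((Fin.castSucc m : Fin (k + 2)) : ℕ) = (m : ℕ) := rfl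
      rw [dIter_congr X.M X.d (k + 1 - ((Fin.castSucc m : Fin (k + 2)) : ℕ))
        ((k - (m : ℕ)) + 1) (by omega) i (by omega) x]
      rw [dIter_succ_apply X.M X.d (k - (m : ℕ)) i (by push_cast; ring) x]
      rw [lcast_lcast]
      rw [lof_lcast_left X Y]
      have hc : (((ξ ^ ((i + 1) * ((m : ℕ) : ℤ)) : Rˣ) : R) * gb (ξ : R) k (m : ℕ) : R)
          = ((ξ ^ (i * ((m : ℕ) : ℤ)) : Rˣ) : R)
            * ((ξ : R) ^ (m : ℕ) * gb (ξ : R) k (m : ℕ)) := by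
        rw [show (i + 1) * ((m : ℕ) : ℤ) = i * ((m : ℕ) : ℤ) + ((m : ℕ) : ℤ) by ring,
          zpow_add, Units.val_mul, zpow_natCast, Units.val_pow_eq_pow_val, mul_assoc]
      rw [hc]
      rfl
    · -- Y side
      rw [Fin.sum_univ_succ]
      rw [show gbp (ξ : R) k (((0 : Fin (k + 2)) : ℕ)) = 0 from rfl]
      simp only [mul_zero, zero_smul, zero_add]
      apply Finset.sum_congr rfl
      intro m _
      have hlt := m.isLt
      have e0 : ((Fin.succ m : Fin (k + 2)) : ℕ) = (m : ℕ) + 1 := rfl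
      rw [dIter_congr X.M X.d (k + 1 - ((Fin.succ m : Fin (k + 2)) : ℕ))
        (k - (m : ℕ)) (by omega) i (by omega) x]
      rw [lof_lcast_left X Y]
      rw [dIter_congr Y.M Y.d ((Fin.succ m : Fin (k + 2)) : ℕ) ((m : ℕ) + 1) e0 j
        (by omega) y]
      rw [dIter_succ_apply Y.M Y.d (m : ℕ) j (by push_cast; ring) y]
      rw [lcast_lcast]
      rw [lof_lcast_right X Y]
      have hc : (((ξ ^ i : Rˣ) : R) * (((ξ ^ (i * ((m : ℕ) : ℤ)) : Rˣ) : R)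
            * gb (ξ : R) k (m : ℕ)) : R)
          = ((ξ ^ (i * (((m : ℕ) : ℤ) + 1)) : Rˣ) : R) * gb (ξ : R) k (m : ℕ) := by
        rw [show i * (((m : ℕ) : ℤ) + 1) = i + i * ((m : ℕ) : ℤ) by ring,
          zpow_add, Units.val_mul, mul_assoc]
      rw [hc]
      rfl

/-- Let `R` be an integral domain, `N` a natural number and `ξ` a primitive `N`-th root
of unity in `R`.  If `X` and `Y` are `N`-complexes of `R`-modules, then the twisted
tensor product `X ⊗_ξ Y`, with `(X ⊗_ξ Y)^n = ⊕_{i+j=n} X^i ⊗ Y^j` and differential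
`d(x ⊗ y) = d_X x ⊗ y + ξ^i • (x ⊗ d_Y y)` on the summand `X^i ⊗ Y^j`, satisfies
`d^N = 0`, i.e. it is again an `N`-complex. -/
theorem tensor_isNComplex (R : Type u) [CommRing R] [IsDomain R] (N : ℕ) (ξ : Rˣ)
    (hξ : IsPrimitiveRoot ξ N) (X Y : NCx.{u, v} R N) (n : ℤ) :
    dIter (TObj X Y) (TD ξ X Y) N n = 0 := by
  refine DirectSum.linearMap_ext _ fun p => ?_
  obtain ⟨⟨i, j⟩, hij⟩ := p
  dsimp only
  apply TensorProduct.ext'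
  intro x y
  simp only [LinearMap.comp_apply, LinearMap.zero_apply, LinearMap.zero_comp]
  show dIter (TObj X Y) (TD ξ X Y) N n (Lof X Y n i j hij (x ⊗ₜ y)) = 0
  refine (dIter_TD_lof ξ X Y N n i j hij x y).trans ?_
  apply Finset.sum_eq_zero
  intro m _
  have hlt := m.isLt
  by_cases hm0 : (m : ℕ) = 0
  · rw [dIter_congr X.M X.d (N - (m : ℕ)) N (by omega) i (by omega) x]
    rw [X.dN i]
    simp
  · by_cases hmN : (m : ℕ) = N
    · rw [dIter_congr Y.M Y.d (m : ℕ) N hmN j (by omega) y]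
      rw [Y.dN j]
      simp
    · rw [gb_eq_zero hξ (by omega) (by omega), mul_zero, zero_smul]
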